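/- Let (X, γ) be a generalized Minkowski space whose gauge γ is strictly convex. Then for every finite non-collinear set P = {p₁, …, pₙ} ⊆ X (i.e., P is not contained in any affine line), the Fermat–Torricelli locus ft(P) consists of exactly one point. -/

import Mathlib

/-- A gauge on a real vector space: nonnegative, definite at `0`, positively homogeneous,
and subadditive. -/
def IsGauge {X : Type*} [AddCommGroup X] [Module ℝ X] (γ : X → ℝ) : Prop :=
  (∀ x, 0 ≤ γ x) ∧ (∀ x : X, γ x = 0 → x = 0) ∧
    (∀ (l : ℝ) (x : X), 0 ≤ l → γ (l • x) = l * γ x) ∧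
    ∀ x y, γ (x + y) ≤ γ x + γ y

section Aux
variable {X : Type*} [AddCommGroup X] [Module ℝ X] {γ : X → ℝ}

lemma IsGauge.nonneg (hγ : IsGauge γ) (x : X) : 0 ≤ γ x := hγ.1 x
lemma IsGauge.defn (hγ : IsGauge γ) {x : X} (h : γ x = 0) : x = 0 := hγ.2.1 x h
lemma IsGauge.homog (hγ : IsGauge γ) (l : ℝ) (x : X) (hl : 0 ≤ l) : γ (l • x) = l * γ x :=
  hγ.2.2.1 l x hl
lemma IsGauge.subadd (hγ : IsGauge γ) (x y : X) : γ (x + y) ≤ γ x + γ y := hγ.2.2.2 x y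

lemma IsGauge.zero (hγ : IsGauge γ) : γ (0 : X) = 0 := by
  have := hγ.homog 0 0 le_rfl; simpa using this

lemma IsGauge.pos (hγ : IsGauge γ) {x : X} (hx : x ≠ 0) : 0 < γ x :=
  (hγ.nonneg x).lt_of_ne fun h => hx (hγ.defn h.symm)

lemma IsGauge.comb (hγ : IsGauge γ) (x y : X) {a b : ℝ} (ha : 0 ≤ a) (hb : 0 ≤ b) :
    γ (a • x + b • y) ≤ a * γ x + b * γ y := by
  calc γ (a • x + b • y) ≤ γ (a • x) + γ (b • y) := hγ.subadd _ _
  _ = a * γ x + b * γ y := by rw [hγ.homog a x ha, hγ.homog b y hb]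

lemma IsGauge.convexOn (hγ : IsGauge γ) : ConvexOn ℝ Set.univ γ :=
  ⟨convex_univ, fun x _ y _ a b ha hb _ => hγ.comb x y ha hb⟩

lemma IsGauge.parallel_of_add_eq (hγ : IsGauge γ)
    (hsc : ∀ x y : X, segment ℝ x y ⊆ {z : X | γ z = 1} → x = y)
    {u v : X} (hu : u ≠ 0) (hv : v ≠ 0) (h : γ (u + v) = γ u + γ v) :
    ∃ t : ℝ, 0 < t ∧ u = t • v := by
  have hgu := hγ.pos hu
  have hgv := hγ.pos hv
  set a := (γ u)⁻¹ • u with ha_def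
  set b := (γ v)⁻¹ • v with hb_def
  have hga : γ a = 1 := by
    rw [ha_def, hγ.homog _ _ (inv_nonneg.2 hgu.le)]; field_simp
  have hgb : γ b = 1 := by
    rw [hb_def, hγ.homog _ _ (inv_nonneg.2 hgv.le)]; field_simp
  have hS : 0 < γ u + γ v := by linarith
  set l := γ u / (γ u + γ v) with hl_def
  set m := γ v / (γ u + γ v) with hm_def
  have hl : 0 < l := div_pos hgu hS
  have hm : 0 < m := div_pos hgv hS
  have hlm : l + m = 1 := by rw [hl_def, hm_def]; field_simp
  have hc : γ (l • a + m • b) = 1 := by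
    have hrw : l • a + m • b = (γ u + γ v)⁻¹ • (u + v) := by
      rw [ha_def, hb_def, hl_def, hm_def]
      match_scalars <;> field_simp <;> ring
    rw [hrw, hγ.homog _ _ (inv_nonneg.2 hS.le), h]
    field_simp
  have hseg : segment ℝ a b ⊆ {z : X | γ z = 1} := by
    rintro z ⟨s, t, hs, ht, hst, rfl⟩
    have hup : γ (s • a + t • b) ≤ 1 := by
      have := hγ.comb a b hs ht
      rw [hga, hgb] at this; linarith
    have hlow : 1 ≤ γ (s • a + t • b) := by
      rcases eq_or_lt_of_le hs with hs0 | hs0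
      · have ht1 : t = 1 := by linarith
        rw [← hs0, ht1]; simp [hgb]
      rcases le_or_gt l s with hls | hls
      · have hθ : 0 < l / s := div_pos hl hs0
        have hθ1 : l / s ≤ 1 := (div_le_one hs0).2 hls
        have hdec : l • a + m • b = (l / s) • (s • a + t • b) + (1 - l / s) • b := by
          match_scalars
          · field_simp
          · have ht' : t = 1 - s := by linarith
            have hm' : m = 1 - l := by linarith
            rw [ht', hm']; field_simp; ring
        have hcb := hγ.comb (s • a + t • b) b hθ.le (by linarith : (0:ℝ) ≤ 1 - l / s)
        rw [hgb, ← hdec, hc] at hcb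
        nlinarith
      · have htpos : 0 < t := by
          have : l ≤ 1 := by linarith
          linarith
        have hmt : m ≤ t := by linarith
        have hθ : 0 < m / t := div_pos hm htpos
        have hθ1 : m / t ≤ 1 := (div_le_one htpos).2 hmt
        have hdec : l • a + m • b = (1 - m / t) • a + (m / t) • (s • a + t • b) := by
          match_scalars
          · have hs' : s = 1 - t := by linarith
            have hl' : l = 1 - m := by linarith
            rw [hs', hl']; field_simp; ring
          · field_simp
        have hcb := hγ.comb a (s • a + t • b) (by linarith : (0:ℝ) ≤ 1 - m / t) hθ.le
        rw [hga, ← hdec, hc] at hcb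
        nlinarith
    exact le_antisymm hup hlow
  have hab : a = b := hsc a b hseg
  refine ⟨γ u / γ v, div_pos hgu hgv, ?_⟩
  have h2 : (γ u)⁻¹ • u = (γ v)⁻¹ • v := by rw [← ha_def, ← hb_def, hab]
  calc u = (γ u) • ((γ u)⁻¹ • u) := by rw [smul_smul, mul_inv_cancel₀ hgu.ne', one_smul]
  _ = (γ u) • ((γ v)⁻¹ • v) := by rw [h2]
  _ = (γ u / γ v) • v := by rw [smul_smul, div_eq_mul_inv]

end Aux

/-- If the gauge `γ` is strictly convex (its unit sphere contains no segment of positive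
length), then the Fermat–Torricelli locus of any finite non-collinear set of points is a
singleton. -/
theorem fermatTorricelli_unique_of_strictly_convex_gauge
    {X : Type*} [NormedAddCommGroup X] [NormedSpace ℝ X] [FiniteDimensional ℝ X]
    (γ : X → ℝ) (hγ : IsGauge γ)
    (hsc : ∀ x y : X, segment ℝ x y ⊆ {z : X | γ z = 1} → x = y)
    {n : ℕ} (p : Fin n → X) (hnc : ¬ Collinear ℝ (Set.range p)) :
    ∃! x : X, ∀ y : X, ∑ i, γ (p i - x) ≤ ∑ i, γ (p i - y) := by
  classical
  -- continuity of γ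
  have hcont : Continuous γ := by
    have := hγ.convexOn.continuousOn isOpen_univ
    rwa [continuousOn_univ] at this
  set f : X → ℝ := fun x => ∑ i, γ (p i - x) with hf_def
  have hf_cont : Continuous f := by
    apply continuous_finset_sum
    intro i _
    exact hcont.comp (continuous_const.sub continuous_id)
  -- n is positive
  have hn : 0 < n := by
    rcases Nat.eq_zero_or_pos n with rfl | hn
    · exact absurd (by simp [Set.range_eq_empty, collinear_empty]) hnc
    · exact hn
  set i0 : Fin n := ⟨0, hn⟩
  -- lower bound for γ
  obtain ⟨c, hc, hcle⟩ : ∃ c > 0, ∀ x : X, c * ‖x‖ ≤ γ x := by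
    by_cases hX : ∀ x : X, x = 0
    · refine ⟨1, one_pos, fun x => ?_⟩
      rw [hX x]; simp [hγ.zero]
    · push_neg at hX
      obtain ⟨x₀, hx₀⟩ := hX
      have hsph : (Metric.sphere (0:X) 1).Nonempty :=
        ⟨‖x₀‖⁻¹ • x₀, by simp [norm_smul, norm_ne_zero_iff.2 hx₀]⟩
      obtain ⟨z, hz, hzmin⟩ :=
        (isCompact_sphere (0:X) 1).exists_isMinOn hsph hcont.continuousOn
      have hzne : z ≠ 0 := by
        intro hz0
        rw [Metric.mem_sphere, dist_zero_right, hz0] at hz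
        simp at hz
      refine ⟨γ z, hγ.pos hzne, fun x => ?_⟩
      rcases eq_or_ne x 0 with rfl | hx
      · simp [hγ.zero]
      · have hnx : (0:ℝ) < ‖x‖ := norm_pos_iff.2 hx
        have hmem : ‖x‖⁻¹ • x ∈ Metric.sphere (0:X) 1 := by
          simp [norm_smul, norm_ne_zero_iff.2 hx, inv_mul_cancel₀ hnx.ne']
        have h1 : γ z ≤ γ (‖x‖⁻¹ • x) := hzmin hmem
        have h2 : γ (‖x‖⁻¹ • x) = ‖x‖⁻¹ * γ x := hγ.homog _ _ (inv_nonneg.2 hnx.le)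
        rw [h2] at h1
        calc γ z * ‖x‖ ≤ (‖x‖⁻¹ * γ x) * ‖x‖ := by
              exact mul_le_mul_of_nonneg_right h1 hnx.le
        _ = γ x := by field_simp
  -- coercivity
  have hb : ∀ x, c * ‖x‖ - c * ‖p i0‖ ≤ f x := by
    intro x
    have h1 : γ (p i0 - x) ≤ f x :=
      Finset.single_le_sum (f := fun i => γ (p i - x)) (fun i _ => hγ.nonneg _)
        (Finset.mem_univ i0)
    have h2 : c * ‖p i0 - x‖ ≤ γ (p i0 - x) := hcle _
    have h3 : ‖x‖ - ‖p i0‖ ≤ ‖p i0 - x‖ := by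
      rw [norm_sub_rev]
      have := norm_sub_norm_le x (p i0)
      linarith
    nlinarith
  have hco : Filter.Tendsto f (Filter.cocompact X) Filter.atTop := by
    apply Filter.tendsto_atTop_mono hb
    have h1 : Filter.Tendsto (fun x : X => c * ‖x‖) (Filter.cocompact X) Filter.atTop :=
      (tendsto_norm_cocompact_atTop).const_mul_atTop hc
    simpa [sub_eq_add_neg] using Filter.tendsto_atTop_add_const_right _ (-(c * ‖p i0‖)) h1
  obtain ⟨x₀, hx₀⟩ := hf_cont.exists_forall_le hco
  refine ⟨x₀, hx₀, fun y hy => ?_⟩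
  by_contra hne
  apply hnc
  -- both minimize, so f y = f x₀
  have hfeq : f y = f x₀ := le_antisymm (hy x₀) (hx₀ y)
  set w : X := (1/2 : ℝ) • (y + x₀) with hw_def
  have hmid : ∀ i, p i - w = (1/2 : ℝ) • (p i - y) + (1/2 : ℝ) • (p i - x₀) := by
    intro i; rw [hw_def]; module
  have hle : ∀ i ∈ Finset.univ,
      γ (p i - w) ≤ (1/2) * γ (p i - y) + (1/2) * γ (p i - x₀) := by
    intro i _
    rw [hmid i]
    exact hγ.comb _ _ (by norm_num) (by norm_num)
  have hsum : ∑ i, γ (p i - w) = ∑ i, ((1/2) * γ (p i - y) + (1/2) * γ (p i - x₀)) := by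
    have h1 : ∑ i, ((1/2) * γ (p i - y) + (1/2) * γ (p i - x₀)) = f x₀ := by
      rw [Finset.sum_add_distrib, ← Finset.mul_sum, ← Finset.mul_sum]
      have hy' : ∑ i, γ (p i - y) = f y := rfl
      have hx' : ∑ i, γ (p i - x₀) = f x₀ := rfl
      rw [hy', hx', hfeq]; ring
    have h2 : f x₀ ≤ f w := hx₀ w
    have h3 : f w ≤ ∑ i, ((1/2) * γ (p i - y) + (1/2) * γ (p i - x₀)) :=
      Finset.sum_le_sum hle
    have : f w = ∑ i, γ (p i - w) := rfl
    linarith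
  have heach := (Finset.sum_eq_sum_iff_of_le hle).1 hsum
  -- collinearity
  rw [collinear_iff_exists_forall_eq_smul_vadd]
  refine ⟨x₀, y - x₀, ?_⟩
  rintro q ⟨i, rfl⟩
  rcases eq_or_ne (p i) x₀ with hpx | hpx
  · exact ⟨0, by simp [hpx]⟩
  rcases eq_or_ne (p i) y with hpy | hpy
  · exact ⟨1, by simp [hpy]⟩
  -- the strict convexity argument
  have hu : (1/2 : ℝ) • (p i - y) ≠ 0 := by
    simp only [ne_eq, smul_eq_zero, sub_eq_zero]
    push_neg
    exact ⟨by norm_num, hpy⟩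
  have hv : (1/2 : ℝ) • (p i - x₀) ≠ 0 := by
    simp only [ne_eq, smul_eq_zero, sub_eq_zero]
    push_neg
    exact ⟨by norm_num, hpx⟩
  have hg : γ ((1/2 : ℝ) • (p i - y) + (1/2 : ℝ) • (p i - x₀)) =
      γ ((1/2 : ℝ) • (p i - y)) + γ ((1/2 : ℝ) • (p i - x₀)) := by
    rw [← hmid i, hγ.homog _ _ (by norm_num : (0:ℝ) ≤ 1/2),
      hγ.homog _ _ (by norm_num : (0:ℝ) ≤ 1/2)]
    exact heach i (Finset.mem_univ i)
  obtain ⟨t, ht, hpar⟩ := hγ.parallel_of_add_eq hsc hu hv hg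
  have heq : p i - y = t • (p i - x₀) := by
    have h2 : (1/2 : ℝ) • (p i - y) = (1/2 : ℝ) • (t • (p i - x₀)) := by
      rw [hpar, smul_comm]
    exact smul_right_injective X (by norm_num : (1/2 : ℝ) ≠ 0) h2
  have ht1 : t ≠ 1 := by
    intro h1
    rw [h1, one_smul] at heq
    exact hne (sub_right_injective heq)
  refine ⟨(1 - t)⁻¹, ?_⟩
  have h1t : (1:ℝ) - t ≠ 0 := sub_ne_zero_of_ne (Ne.symm ht1)
  show p i = (1 - t)⁻¹ • (y - x₀) + x₀
  apply smul_right_injective X h1t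
  show (1 - t) • (p i) = (1 - t) • ((1 - t)⁻¹ • (y - x₀) + x₀)
  rw [smul_add, smul_smul, mul_inv_cancel₀ h1t, one_smul]
  linear_combination (norm := module) heq
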